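/- For all r, s ∈ (0,1), one has 4(1−r)s(1−s) < 1 − rs; equivalently 0 < (1−r)s(1−s)/(1−rs) < 1/4. Consequently, for any ξ, φ ∈ [0,2π), the 2×2 coefficient matrix M of the two-qubit Hardy state |ψ(r,s)⟩ = −√((1−r)r(1−s)s/(1−rs))|00⟩ − e^{iξ}√((1−r)²s/(1−rs))|01⟩ − e^{iφ}√((1−r)(1−s))|10⟩ + e^{i(ξ+φ)}√r|11⟩ (i.e. M_{jk} is the coefficient of |jk⟩) satisfies |det M|² = (1−r)s(1−s)/(1−rs) and 0 < |det M| < 1/2; hence |ψ(r,s)⟩ is entangled but not maximally entangled. -/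

import Mathlib

open Real Complex Matrix

theorem hardy_state_entangled_not_maximally
    (r s : ℝ) (hr : r ∈ Set.Ioo (0 : ℝ) 1) (hs : s ∈ Set.Ioo (0 : ℝ) 1)
    (ξ φ : ℝ) (hξ : ξ ∈ Set.Ico 0 (2 * π)) (hφ : φ ∈ Set.Ico 0 (2 * π))
    (M : Matrix (Fin 2) (Fin 2) ℂ)
    (hM : M = !![-(Real.sqrt ((1 - r) * r * (1 - s) * s / (1 - r * s)) : ℂ),
                 -(Complex.exp (Complex.I * ξ) * Real.sqrt ((1 - r) ^ 2 * s / (1 - r * s)));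
                 -(Complex.exp (Complex.I * φ) * Real.sqrt ((1 - r) * (1 - s))),
                 Complex.exp (Complex.I * (ξ + φ)) * Real.sqrt r]) :
    4 * ((1 - r) * s * (1 - s)) < 1 - r * s ∧
    (0 < (1 - r) * s * (1 - s) / (1 - r * s) ∧ (1 - r) * s * (1 - s) / (1 - r * s) < 1 / 4) ∧
    ‖M.det‖ ^ 2 = (1 - r) * s * (1 - s) / (1 - r * s) ∧
    (0 < ‖M.det‖ ∧ ‖M.det‖ < 1 / 2) := by
  obtain ⟨hr0, hr1⟩ := hr
  obtain ⟨hs0, hs1⟩ := hs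
  have hD : 0 < 1 - r * s := by nlinarith
  set E : ℝ := (1 - r) * s * (1 - s) / (1 - r * s) with hE
  have h1r : (0:ℝ) < 1 - r := by linarith
  have h1s : (0:ℝ) < 1 - s := by linarith
  have hEpos : 0 < E := div_pos (by positivity) hD
  have h1 : 4 * ((1 - r) * s * (1 - s)) < 1 - r * s := by nlinarith [sq_nonneg (1 - 2*s), mul_pos hr0 hs0]
  have h2 : E < 1 / 4 := by
    rw [div_lt_iff₀ hD]; nlinarith
  -- A, B, C
  have hA : (0:ℝ) ≤ (1 - r) * r * (1 - s) * s / (1 - r * s) := div_nonneg (by positivity) hD.le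
  have hB : (0:ℝ) ≤ (1 - r) ^ 2 * s / (1 - r * s) := div_nonneg (by positivity) hD.le
  have hAr : ((1 - r) * r * (1 - s) * s / (1 - r * s)) * r = r ^ 2 * E := by
    rw [div_mul_eq_mul_div, hE, mul_div_assoc', div_left_inj' hD.ne']; ring
  have hBC : ((1 - r) ^ 2 * s / (1 - r * s)) * ((1 - r) * (1 - s)) = (1 - r) ^ 2 * E := by
    rw [div_mul_eq_mul_div, hE, mul_div_assoc', div_left_inj' hD.ne']; ring
  have key1 : Real.sqrt ((1 - r) * r * (1 - s) * s / (1 - r * s)) * Real.sqrt r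
      = r * Real.sqrt E := by
    rw [← Real.sqrt_mul hA, hAr, Real.sqrt_mul (by positivity), Real.sqrt_sq hr0.le]
  have key2 : Real.sqrt ((1 - r) ^ 2 * s / (1 - r * s)) * Real.sqrt ((1 - r) * (1 - s))
      = (1 - r) * Real.sqrt E := by
    rw [← Real.sqrt_mul hB, hBC, Real.sqrt_mul (by positivity), Real.sqrt_sq h1r.le]
  have hdet : M.det = -(Complex.exp (Complex.I * (ξ + φ)) * (Real.sqrt E : ℂ)) := by
    subst hM
    rw [Matrix.det_fin_two_of]
    have hexp : Complex.exp (Complex.I * ξ) * Complex.exp (Complex.I * φ)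
        = Complex.exp (Complex.I * (ξ + φ)) := by
      rw [← Complex.exp_add]; push_cast; ring_nf
    have k1 : ((Real.sqrt ((1 - r) * r * (1 - s) * s / (1 - r * s)) : ℝ) : ℂ) * (Real.sqrt r : ℂ)
        = (r : ℂ) * (Real.sqrt E : ℂ) := by exact_mod_cast congrArg Complex.ofReal key1
    have k2 : ((Real.sqrt ((1 - r) ^ 2 * s / (1 - r * s)) : ℝ) : ℂ) *
        (Real.sqrt ((1 - r) * (1 - s)) : ℂ) = ((1 - r : ℝ) : ℂ) * (Real.sqrt E : ℂ) := by
      exact_mod_cast congrArg Complex.ofReal key2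
    have : -(Real.sqrt ((1 - r) * r * (1 - s) * s / (1 - r * s)) : ℂ) *
        (Complex.exp (Complex.I * (↑ξ + ↑φ)) * (Real.sqrt r : ℂ)) -
        -(Complex.exp (Complex.I * ξ) * (Real.sqrt ((1 - r) ^ 2 * s / (1 - r * s)) : ℂ)) *
        -(Complex.exp (Complex.I * φ) * (Real.sqrt ((1 - r) * (1 - s)) : ℂ))
        = -(Complex.exp (Complex.I * (↑ξ + ↑φ)) * (Real.sqrt E : ℂ)) := by
      have expand :
          -(Real.sqrt ((1 - r) * r * (1 - s) * s / (1 - r * s)) : ℂ) *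
          (Complex.exp (Complex.I * (↑ξ + ↑φ)) * (Real.sqrt r : ℂ)) -
          -(Complex.exp (Complex.I * ξ) * (Real.sqrt ((1 - r) ^ 2 * s / (1 - r * s)) : ℂ)) *
          -(Complex.exp (Complex.I * φ) * (Real.sqrt ((1 - r) * (1 - s)) : ℂ))
          = -(Complex.exp (Complex.I * (↑ξ + ↑φ)) *
              ((Real.sqrt ((1 - r) * r * (1 - s) * s / (1 - r * s)) : ℂ) * (Real.sqrt r : ℂ) +
               (Real.sqrt ((1 - r) ^ 2 * s / (1 - r * s)) : ℂ) *
               (Real.sqrt ((1 - r) * (1 - s)) : ℂ))) := by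
        rw [← hexp]; ring
      rw [expand, k1, k2]; push_cast; ring
    convert this using 2 <;> push_cast <;> ring
  have hnorm : ‖M.det‖ = Real.sqrt E := by
    rw [hdet]
    simp [Complex.norm_exp, Real.sqrt_nonneg]
  refine ⟨h1, ⟨hEpos, h2⟩, ?_, ?_, ?_⟩
  · rw [hnorm, Real.sq_sqrt hEpos.le]
  · rw [hnorm]; positivity
  · rw [hnorm]
    have : Real.sqrt E < Real.sqrt (1/4) := Real.sqrt_lt_sqrt hEpos.le h2
    calc Real.sqrt E < Real.sqrt (1/4) := this
      _ = 1/2 := by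
        rw [show (1/4 : ℝ) = (1/2)^2 by norm_num, Real.sqrt_sq (by norm_num)]
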